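/- Let X be a set, let P and Q be nonempty words in the free semigroup on X, and let S be the semigroup presented by generators {a} ∪ X (a ∉ X) with the single defining relation aP = Q, i.e. the quotient of the free semigroup on {a} ∪ X by the smallest congruence identifying the words aP and Q. Then H²(S,A) = 0 for every S-module A, and c.d. S = 1. -/

import Mathlib

structure SgModule (S : Type) [Semigroup S] where
  carrier : Type
  [grp : AddCommGroup carrier]
  smul : S → carrier → carrier
  smul_add : ∀ s a b, smul s (a + b) = smul s a + smul s b
  mul_smul : ∀ s t a, smul (s * t) a = smul s (smul t a)

attribute [instance] SgModule.grp

/-- `altSign k a = (-1)^k • a`. -/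
def altSign {A : Type} [AddCommGroup A] (k : ℕ) (a : A) : A :=
  if Even k then a else -a

lemma altSign_add {A : Type} [AddCommGroup A] (k : ℕ) (a b : A) :
    altSign k (a + b) = altSign k a + altSign k b := by
  unfold altSign; split <;> [rfl; exact neg_add a b]

def mulContract {S : Type} [Mul S] {n : ℕ} (x : Fin (n + 1) → S) (i : Fin n) :
    Fin n → S := fun j =>
  if (j : ℕ) < (i : ℕ) then x j.castSucc
  else if (j : ℕ) = (i : ℕ) then x j.castSucc * x j.succ
  else x j.succ

namespace SgModule

variable {S : Type} [Semigroup S] (M : SgModule S)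

abbrev cochain (n : ℕ) : Type := (Fin n → S) → M.carrier

def cobFun {n : ℕ} (f : M.cochain n) : M.cochain (n + 1) := fun x =>
  M.smul (x 0) (f (Fin.tail x))
    + (∑ i : Fin n, altSign ((i : ℕ) + 1) (f (mulContract x i)))
    + altSign (n + 1) (f (Fin.init x))

lemma cobFun_add {n : ℕ} (f g : M.cochain n) :
    M.cobFun (f + g) = M.cobFun f + M.cobFun g := by
  funext x
  show M.cobFun (f + g) x = M.cobFun f x + M.cobFun g x
  unfold cobFun
  simp only [Pi.add_apply, altSign_add, M.smul_add]
  rw [Finset.sum_add_distrib]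
  abel

def cob (n : ℕ) : M.cochain n →+ M.cochain (n + 1) :=
  AddMonoidHom.mk' M.cobFun M.cobFun_add

def cocycles (n : ℕ) : AddSubgroup (M.cochain n) := (M.cob n).ker

def cobounds : (n : ℕ) → AddSubgroup (M.cochain n)
  | 0 => ⊥
  | n + 1 => (M.cob n).range

def cohomology (n : ℕ) : Type :=
  M.cocycles n ⧸ (M.cobounds n).addSubgroupOf (M.cocycles n)

noncomputable instance (n : ℕ) : AddCommGroup (M.cohomology n) := by
  unfold cohomology; infer_instance

end SgModule

noncomputable def cohDim (S : Type) [Semigroup S] : ℕ∞ :=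
  sSup {e : ℕ∞ | ∃ n : ℕ, e = (n : ℕ∞) ∧ ∃ M : SgModule S, Nontrivial (M.cohomology n)}

def IsFreeSemigroup (T : Type) [Semigroup T] : Prop :=
  ∃ X : Type, Nonempty (T ≃* FreeSemigroup X)


/-- The semigroup `S = ⟨a, X ∣ aP = Q⟩`, where `P` and `Q` are nonempty words
in the alphabet `X` (elements of the free semigroup on `X`) and `a ∉ X` (here
`a` is the generator `none`, and `X` is embedded as `some`). -/
def relAPQ (X : Type) (P Q : FreeSemigroup X) : Con (FreeSemigroup (Option X)) :=
  conGen (fun u v =>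
    u = FreeSemigroup.of none * FreeSemigroup.map (some : X → Option X) P ∧
      v = FreeSemigroup.map (some : X → Option X) Q)

/-! ### Auxiliary development -/

section FinLemmas

variable {S : Type} [Mul S] {n : ℕ}

lemma mulContract_cons_zero (a : S) (y : Fin (n + 1) → S) :
    mulContract (Fin.cons a y) 0 = Fin.cons (a * y 0) (Fin.tail y) := by
  funext j
  refine Fin.cases ?_ (fun j => ?_) j
  · simp [mulContract]
  · simp only [mulContract, Fin.val_succ, Fin.val_zero, Fin.cons_succ]
    rw [if_neg (by omega), if_neg (by omega)]
    rfl

lemma mulContract_cons_succ (a : S) (y : Fin (n + 1) → S) (j : Fin n) :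
    mulContract (Fin.cons a y) j.succ = Fin.cons a (mulContract y j) := by
  funext k
  refine Fin.cases ?_ (fun k => ?_) k
  · simp [mulContract]
  · simp only [mulContract, Fin.val_succ, Fin.cons_succ]
    by_cases h1 : (k : ℕ) < (j : ℕ)
    · rw [if_pos (by omega), if_pos h1, ← Fin.succ_castSucc, Fin.cons_succ]
    by_cases h2 : (k : ℕ) = (j : ℕ)
    · rw [if_neg (by omega), if_pos (by omega), if_neg (by omega), if_pos h2,
        ← Fin.succ_castSucc, Fin.cons_succ]
    · rw [if_neg (by omega), if_neg (by omega), if_neg h1, if_neg h2]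

omit [Mul S] in
lemma init_cons' (a : S) (y : Fin (n + 1) → S) :
    Fin.init (Fin.cons (α := fun _ => S) a y) = Fin.cons (α := fun _ => S) a (Fin.init y) := by
  funext k
  refine Fin.cases ?_ (fun k => ?_) k
  · simp [Fin.init]
  · simp only [Fin.init, Fin.cons_succ]
    rw [← Fin.succ_castSucc, Fin.cons_succ]

end FinLemmas

section AltSign

variable {A : Type} [AddCommGroup A]

lemma altSign_neg (k : ℕ) (a : A) : altSign k (-a) = -altSign k a := by
  unfold altSign; split <;> simp

lemma altSign_succ (k : ℕ) (a : A) : altSign (k + 1) a = -altSign k a := by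
  unfold altSign
  by_cases h : Even k
  · rw [if_pos h, if_neg (by simp [Nat.even_add_one, h])]
  · rw [if_neg h, if_pos (by simp [Nat.even_add_one, h]), neg_neg]

lemma altSign_one (a : A) : altSign 1 a = -a := by
  rw [show (1 : ℕ) = 0 + 1 from rfl, altSign_succ]; rfl

@[simp] lemma altSign_zero (a : A) : altSign 0 a = a := rfl

end AltSign

namespace SgModule

variable {S : Type} [Semigroup S] (M : SgModule S)

/-- `M.smul s` as an additive monoid hom. -/
def smulHom (s : S) : M.carrier →+ M.carrier := AddMonoidHom.mk' (M.smul s) (M.smul_add s)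

lemma smul_sub' (s : S) (a b : M.carrier) :
    M.smul s (a - b) = M.smul s a - M.smul s b := (M.smulHom s).map_sub a b

lemma smul_neg' (s : S) (a : M.carrier) : M.smul s (-a) = -M.smul s a :=
  (M.smulHom s).map_neg a

lemma smul_altSign (s : S) (k : ℕ) (a : M.carrier) :
    M.smul s (altSign k a) = altSign k (M.smul s a) := by
  unfold altSign; split <;> simp [M.smul_neg']

lemma cobFun_sub {n : ℕ} (f g : M.cochain n) :
    M.cobFun (f - g) = M.cobFun f - M.cobFun g := (M.cob n).map_sub f g

lemma cobFun_zero {n : ℕ} : M.cobFun (0 : M.cochain n) = 0 := (M.cob n).map_zero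

end SgModule
namespace SgModule

variable {S : Type} [Semigroup S] (M : SgModule S)

lemma smul_sum {α : Type} (s : S) (t : Finset α) (g : α → M.carrier) :
    M.smul s (∑ i ∈ t, g i) = ∑ i ∈ t, M.smul s (g i) :=
  map_sum (M.smulHom s) g t

lemma cob_cons {m : ℕ} (f : M.cochain (m + 1)) (a : S) (y : Fin (m + 1) → S) :
    M.cobFun f (Fin.cons a y)
      = M.smul a (f y) - f (Fin.cons (a * y 0) (Fin.tail y))
        - M.cobFun (fun z => f (Fin.cons a z)) y
        + M.smul (y 0) (f (Fin.cons a (Fin.tail y))) := by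
  unfold cobFun
  rw [Fin.sum_univ_succ]
  simp only [Fin.cons_zero, Fin.tail_cons, mulContract_cons_zero, mulContract_cons_succ,
    init_cons', Fin.val_succ, Fin.val_zero, altSign_succ, altSign_one, altSign_zero,
    M.smul_neg', Finset.sum_neg_distrib]
  abel

lemma cob_smul {m : ℕ} (f : M.cochain m) (b : S) (y : Fin (m + 1) → S) :
    M.cobFun (fun z => M.smul b (f z)) y
      = M.smul b (M.cobFun f y) + M.smul (y 0 * b) (f (Fin.tail y))
        - M.smul (b * y 0) (f (Fin.tail y)) := by
  unfold cobFun
  simp only [M.smul_add, M.smul_sum, smul_altSign, M.mul_smul]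
  abel

lemma cob_sigma {m : ℕ} (f : M.cochain (m + 1)) (a : S) (y : Fin (m + 2) → S) :
    M.cobFun (fun w => f (Fin.cons (a * w 0) (Fin.tail w))) y
      = M.smul (y 0) (f (Fin.cons (a * Fin.tail y 0) (Fin.tail (Fin.tail y))))
        - f (Fin.cons (a * (y 0 * Fin.tail y 0)) (Fin.tail (Fin.tail y)))
        - M.cobFun (fun z => f (Fin.cons (a * y 0) z)) (Fin.tail y)
        + M.smul (Fin.tail y 0) (f (Fin.cons (a * y 0) (Fin.tail (Fin.tail y)))) := by
  conv_lhs => rw [← Fin.cons_self_tail y]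
  unfold cobFun
  rw [Fin.sum_univ_succ]
  simp only [Fin.cons_zero, Fin.tail_cons, mulContract_cons_zero, mulContract_cons_succ,
    init_cons', Fin.val_succ, Fin.val_zero, altSign_succ, altSign_one, altSign_zero,
    M.smul_neg', Finset.sum_neg_distrib]
  abel

lemma cob_psi {m : ℕ} (f : M.cochain (m + 1)) (a : S) (y : Fin (m + 2) → S) :
    M.cobFun (fun w => M.smul (w 0) (f (Fin.cons a (Fin.tail w)))) y
      = M.smul (y 0) (M.smul (Fin.tail y 0) (f (Fin.cons a (Fin.tail (Fin.tail y)))))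
        - M.smul (y 0) (M.cobFun (fun z => f (Fin.cons a z)) (Fin.tail y)) := by
  conv_lhs => rw [← Fin.cons_self_tail y]
  unfold cobFun
  rw [Fin.sum_univ_succ]
  simp only [Fin.cons_zero, Fin.tail_cons, mulContract_cons_zero, mulContract_cons_succ,
    init_cons', Fin.val_succ, Fin.val_zero, altSign_succ, altSign_one, altSign_zero,
    M.smul_neg', Finset.sum_neg_distrib, M.smul_add, M.smul_sum, smul_altSign, M.mul_smul]
  abel

theorem cob_cob : ∀ {n : ℕ} (f : M.cochain n), M.cobFun (M.cobFun f) = 0 := by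
  intro n
  induction n with
  | zero =>
    intro f
    funext x
    have hc : ∀ w : Fin 0 → S, f w = f (Fin.tail (Fin.tail x)) :=
      fun w => congrArg f (Subsingleton.elim _ _)
    have e : ∀ u : Fin 1 → S, M.cobFun f u
        = M.smul (u 0) (f (Fin.tail (Fin.tail x))) + -(f (Fin.tail (Fin.tail x))) := by
      intro u
      simp [cobFun, altSign_one, hc]
    show M.smul (x 0) (M.cobFun f (Fin.tail x))
        + (∑ i : Fin 1, altSign ((i : ℕ) + 1) (M.cobFun f (mulContract x i)))
        + altSign 2 (M.cobFun f (Fin.init x)) = 0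
    rw [Fin.sum_univ_one, e, e, e]
    simp only [mulContract, Fin.init, Fin.tail, if_pos, if_neg, Fin.val_zero, lt_irrefl,
      if_false, if_true, Fin.castSucc_zero, Fin.succ_zero_eq_one, altSign_one, altSign_succ,
      altSign_zero, M.smul_add, M.mul_smul, M.smul_neg', neg_neg, if_pos rfl]
    abel
  | succ m ih =>
    intro F
    funext x
    rw [← Fin.cons_self_tail x]
    set a := x 0
    set y := Fin.tail x with hy
    rw [cob_cons M (M.cobFun F) a y]
    have h2 : (fun z : Fin (m + 1) → S => M.cobFun F (Fin.cons a z))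
        = ((fun z => M.smul a (F z)) - (fun z => F (Fin.cons (a * z 0) (Fin.tail z)))
            - M.cobFun (fun z' => F (Fin.cons a z'))
            + (fun z => M.smul (z 0) (F (Fin.cons a (Fin.tail z))))) := by
      funext z
      simp only [Pi.add_apply, Pi.sub_apply]
      exact M.cob_cons F a z
    rw [h2, M.cobFun_add, M.cobFun_sub, M.cobFun_sub, ih]
    simp only [Pi.add_apply, Pi.sub_apply, Pi.zero_apply]
    rw [M.cob_cons F (a * y 0) (Fin.tail y),
      M.cob_cons F a (Fin.tail y), M.cob_smul, M.cob_sigma, M.cob_psi]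
    simp only [Pi.add_apply, Pi.sub_apply, Pi.zero_apply, M.smul_add, M.smul_sub', M.mul_smul,
      mul_assoc]
    abel

end SgModule
namespace SgModule

variable {S : Type} [Semigroup S]

/-- `o * s` for `o ∈ S¹`. -/
def mulO (o : Option S) (s : S) : S := o.elim s (fun t => t * s)

variable (M : SgModule S)

lemma cobFun_apply {n : ℕ} (f : M.cochain n) (x : Fin (n + 1) → S) :
    M.cobFun f x = M.smul (x 0) (f (Fin.tail x))
      + (∑ i : Fin n, altSign ((i : ℕ) + 1) (f (mulContract x i)))
      + altSign (n + 1) (f (Fin.init x)) := rfl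

/-- The coinduced module `Maps(S¹, A)`. -/
def Emod : SgModule S where
  carrier := Option S → M.carrier
  grp := inferInstance
  smul s ε o := ε (some (mulO o s))
  smul_add s a b := rfl
  mul_smul s t ε := by
    show (fun o => ε (some (mulO o (s * t)))) = fun o => ε (some (mulO (some (mulO o s)) t))
    funext o
    cases o <;> simp [mulO, mul_assoc]

lemma Emod_smul_apply (s : S) (ε : M.Emod.carrier) (o : Option S) :
    M.Emod.smul s ε o = ε (some (mulO o s)) := rfl

lemma Eadd_apply (w w' : M.Emod.carrier) (o : Option S) : (w + w') o = w o + w' o := rfl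

/-- Evaluation at a point, as an additive hom. -/
def evalE (o : Option S) : M.Emod.carrier →+ M.carrier :=
  AddMonoidHom.mk' (fun ε => ε o) (fun _ _ => rfl)

lemma Esum_apply {α : Type} [DecidableEq α] (s : Finset α) (g : α → M.Emod.carrier) (o : Option S) :
    (∑ i ∈ s, g i) o = ∑ i ∈ s, g i o := by
  induction s using Finset.induction with
  | empty =>
    rw [Finset.sum_empty, Finset.sum_empty]
    rfl
  | insert _ _ h ih =>
    rw [Finset.sum_insert h, Finset.sum_insert h, Eadd_apply, ih]

lemma Emod_altSign_apply (k : ℕ) (ε : M.Emod.carrier) (o : Option S) :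
    altSign k ε o = altSign k (ε o) := by
  unfold altSign; split <;> rfl

/-- The embedding `A → Maps(S¹, A)`, `a ↦ (t ↦ t • a)`. -/
def iotaE (a : M.carrier) : M.Emod.carrier := fun o => o.elim a (fun t => M.smul t a)

lemma iotaE_add (a b : M.carrier) : M.iotaE (a + b) = M.iotaE a + M.iotaE b := by
  funext o
  rw [Eadd_apply]
  cases o <;> simp [iotaE, M.smul_add]

lemma iotaE_smul (s : S) (a : M.carrier) :
    M.iotaE (M.smul s a) = M.Emod.smul s (M.iotaE a) := by
  funext o
  rw [Emod_smul_apply]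
  show _ = M.iotaE a (some (mulO o s))
  cases o <;> simp [iotaE, mulO, M.mul_smul]

lemma iotaE_inj : Function.Injective M.iotaE := fun a b h => congrFun h none

/-- Naturality of the coboundary under additive equivariant maps. -/
lemma cobFun_comp {M N : SgModule S} (φ : M.carrier → N.carrier)
    (hadd : ∀ a b, φ (a + b) = φ a + φ b)
    (hsm : ∀ s a, φ (M.smul s a) = N.smul s (φ a))
    {n : ℕ} (f : M.cochain n) :
    N.cobFun (fun x => φ (f x)) = fun x => φ (M.cobFun f x) := by
  funext x
  have h3 : ∀ (k : ℕ) (u : M.carrier), φ (altSign k u) = altSign k (φ u) := by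
    intro k u
    unfold altSign
    split
    · rfl
    · exact (AddMonoidHom.mk' φ hadd).map_neg u
  have hsumφ : φ (∑ i : Fin n, altSign ((i : ℕ) + 1) (f (mulContract x i)))
      = ∑ i : Fin n, φ (altSign ((i : ℕ) + 1) (f (mulContract x i))) :=
    map_sum (AddMonoidHom.mk' φ hadd) _ _
  rw [cobFun_apply, cobFun_apply, hadd, hadd, hsm, hsumφ]
  simp only [h3]

/-- Contracting homotopy for the coinduced module. -/
def hEfun {k : ℕ} (F : M.Emod.cochain (k + 1)) : M.Emod.cochain k :=
  fun v o => o.elim 0 (fun t => F (Fin.cons t v) none)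

lemma hEfun_some {k : ℕ} (F : M.Emod.cochain (k + 1)) (v : Fin k → S) (t : S) :
    M.hEfun F v (some t) = F (Fin.cons t v) none := rfl

lemma hEfun_none {k : ℕ} (F : M.Emod.cochain (k + 1)) (v : Fin k → S) :
    M.hEfun F v none = 0 := rfl

lemma hEfun_zero {k : ℕ} : M.hEfun (0 : M.Emod.cochain (k + 1)) = 0 := by
  funext v o
  show o.elim 0 _ = (0 : M.Emod.carrier) o
  cases o <;> rfl

lemma altSign_zero_val {A : Type} [AddCommGroup A] (k : ℕ) : altSign k (0 : A) = 0 := by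
  unfold altSign; split <;> simp

lemma hE_id {k : ℕ} (F : M.Emod.cochain (k + 1)) :
    M.Emod.cobFun (M.hEfun F) + M.hEfun (M.Emod.cobFun F) = F := by
  funext x o
  show M.Emod.cobFun (M.hEfun F) x o + M.hEfun (M.Emod.cobFun F) x o = F x o
  cases o with
  | none =>
    rw [hEfun_none, add_zero, cobFun_apply, Eadd_apply, Eadd_apply]
    rw [M.Esum_apply, Emod_smul_apply, Emod_altSign_apply, hEfun_none, altSign_zero_val]
    have : ∀ i : Fin k, (altSign ((i : ℕ) + 1) (M.hEfun F (mulContract x i))) none = 0 := by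
      intro i
      rw [Emod_altSign_apply, hEfun_none, altSign_zero_val]
    rw [Finset.sum_congr rfl (fun i _ => this i), Finset.sum_const, smul_zero, add_zero, add_zero]
    show M.hEfun F (Fin.tail x) (some (x 0)) = F x none
    rw [hEfun_some, Fin.cons_self_tail]
  | some t =>
    have e1 : M.Emod.cobFun (M.hEfun F) x (some t)
        = F (Fin.cons (t * x 0) (Fin.tail x)) none
          + (∑ i : Fin k, altSign ((i : ℕ) + 1) (F (Fin.cons t (mulContract x i)) none))
          + altSign (k + 1) (F (Fin.cons t (Fin.init x)) none) := by
      rw [cobFun_apply, Eadd_apply, Eadd_apply, M.Esum_apply, Emod_smul_apply,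
        Emod_altSign_apply, hEfun_some, hEfun_some,
        show mulO (some t) (x 0) = t * x 0 from rfl]
      have hterm : ∀ i : Fin k, altSign ((i : ℕ) + 1) (M.hEfun F (mulContract x i)) (some t)
          = altSign ((i : ℕ) + 1) (F (Fin.cons t (mulContract x i)) none) := fun i => by
        rw [Emod_altSign_apply, hEfun_some]
      rw [Finset.sum_congr rfl (fun i _ => hterm i)]
    have e2 : M.hEfun (M.Emod.cobFun F) x (some t)
        = F x (some t)
          - F (Fin.cons (t * x 0) (Fin.tail x)) none
          - (∑ i : Fin k, altSign ((i : ℕ) + 1) (F (Fin.cons t (mulContract x i)) none))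
          - altSign (k + 1) (F (Fin.cons t (Fin.init x)) none) := by
      rw [hEfun_some, cobFun_apply, Eadd_apply, Eadd_apply, M.Esum_apply, Emod_smul_apply,
        Emod_altSign_apply, Fin.sum_univ_succ]
      have hmc0 : (altSign ((0 : Fin (k+1)) + 1 : ℕ) (F (mulContract (Fin.cons t x) 0))) none
          = - F (Fin.cons (t * x 0) (Fin.tail x)) none := by
        rw [Emod_altSign_apply, mulContract_cons_zero]
        show altSign 1 _ = _
        rw [altSign_one]
      have hmcs : ∀ i : Fin k,
          (altSign (((i.succ : Fin (k+1)) : ℕ) + 1) (F (mulContract (Fin.cons t x) i.succ))) none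
          = - altSign ((i : ℕ) + 1) (F (Fin.cons t (mulContract x i)) none) := by
        intro i
        rw [Emod_altSign_apply, mulContract_cons_succ]
        show altSign ((i : ℕ) + 1 + 1) _ = _
        rw [altSign_succ]
      rw [hmc0, Finset.sum_congr rfl (fun i _ => hmcs i), Finset.sum_neg_distrib, init_cons',
        Fin.tail_cons, Fin.cons_zero, show mulO none t = t from rfl, altSign_succ]
      abel
    rw [e1, e2]
    abel

end SgModule
namespace SgModule

variable {S : Type} [Semigroup S] (M : SgModule S)

/-- `ι` as an additive hom. -/
def iotaHom : M.carrier →+ M.Emod.carrier := AddMonoidHom.mk' M.iotaE M.iotaE_add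

def Bsub : AddSubgroup M.Emod.carrier := M.iotaHom.range

/-- `E.smul s` as an additive hom. -/
def EsmulHom (s : S) : M.Emod.carrier →+ M.Emod.carrier :=
  AddMonoidHom.mk' (M.Emod.smul s) (M.Emod.smul_add s)

lemma Bsub_smul {s : S} {ε : M.Emod.carrier} (h : ε ∈ M.Bsub) : M.Emod.smul s ε ∈ M.Bsub := by
  obtain ⟨a, rfl⟩ := h
  refine ⟨M.smul s a, ?_⟩
  show M.iotaE (M.smul s a) = M.Emod.smul s (M.iotaE a)
  exact M.iotaE_smul s a

/-- The quotient module `E/ιA`. -/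
def Bmod : SgModule S where
  carrier := M.Emod.carrier ⧸ M.Bsub
  grp := inferInstance
  smul s := QuotientAddGroup.lift M.Bsub ((QuotientAddGroup.mk' M.Bsub).comp (M.EsmulHom s))
    (fun ε h => by
      rw [AddMonoidHom.mem_ker, AddMonoidHom.comp_apply, QuotientAddGroup.mk'_apply, QuotientAddGroup.eq_zero_iff]
      exact M.Bsub_smul h)
  smul_add s b c := by
    refine QuotientAddGroup.induction_on b (fun ε => ?_)
    refine QuotientAddGroup.induction_on c (fun η => ?_)
    show QuotientAddGroup.lift _ _ _ ((ε : M.Emod.carrier ⧸ M.Bsub) + (η : _ ⧸ _)) = _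
    rw [← QuotientAddGroup.mk_add]
    show ((M.Emod.smul s (ε + η) : M.Emod.carrier) : M.Emod.carrier ⧸ M.Bsub) = _
    rw [M.Emod.smul_add, QuotientAddGroup.mk_add]
    rfl
  mul_smul s t b := by
    refine QuotientAddGroup.induction_on b (fun ε => ?_)
    show ((M.Emod.smul (s * t) ε : M.Emod.carrier) : M.Emod.carrier ⧸ M.Bsub) = _
    rw [M.Emod.mul_smul]
    rfl

lemma Bmod_smul_mk (s : S) (ε : M.Emod.carrier) :
    M.Bmod.smul s (QuotientAddGroup.mk ε) = QuotientAddGroup.mk (M.Emod.smul s ε) := rfl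

/-- Projection `E → B` (as a function). -/
def pB : M.Emod.carrier → M.Bmod.carrier := fun ε => QuotientAddGroup.mk ε

lemma pB_add (ε η : M.Emod.carrier) : M.pB (ε + η) = M.pB ε + M.pB η := rfl

lemma pB_smul (s : S) (ε : M.Emod.carrier) : M.pB (M.Emod.smul s ε) = M.Bmod.smul s (M.pB ε) :=
  rfl

lemma pB_zero_iff (ε : M.Emod.carrier) : M.pB ε = 0 ↔ ε ∈ M.Bsub :=
  QuotientAddGroup.eq_zero_iff ε

/-- Dimension shifting: if `H² = 0` for all modules, then `Hⁿ = 0` for all `n ≥ 2`. -/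
theorem vanish_of_H2 {S : Type} [Semigroup S]
    (hbase : ∀ (M : SgModule S) (f : M.cochain 2), M.cobFun f = 0 → ∃ g, M.cobFun g = f) :
    ∀ (n : ℕ) (M : SgModule S) (f : M.cochain (n + 2)),
      M.cobFun f = 0 → ∃ g, M.cobFun g = f := by
  intro n
  induction n with
  | zero => exact hbase
  | succ n ih =>
    intro M f hf
    -- embed into the coinduced module
    have hF : M.Emod.cobFun (fun x => M.iotaE (f x)) = fun x => M.iotaE (M.cobFun f x) :=
      cobFun_comp M.iotaE M.iotaE_add M.iotaE_smul f
    have hFc : M.Emod.cobFun (fun x => M.iotaE (f x)) = 0 := by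
      rw [hF, hf]
      funext x
      exact map_zero M.iotaHom
    -- contract
    set e : M.Emod.cochain (n + 2) := M.hEfun (fun x => M.iotaE (f x)) with he_def
    have he : M.Emod.cobFun e = fun x => M.iotaE (f x) := by
      have h0 := M.hE_id (fun x => M.iotaE (f x))
      rw [hFc, M.hEfun_zero, add_zero] at h0
      exact h0
    -- project to B and use the inductive hypothesis
    have hpe : M.Bmod.cobFun (fun x => M.pB (e x)) = 0 := by
      rw [cobFun_comp M.pB M.pB_add M.pB_smul e, he]
      funext x
      exact (M.pB_zero_iff _).2 ⟨f x, rfl⟩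
    obtain ⟨b, hb⟩ := ih M.Bmod (fun x => M.pB (e x)) hpe
    -- lift b pointwise
    set bt : M.Emod.cochain (n + 1) := fun x => (b x).out with hbt
    have hpbt : (fun x => M.pB (bt x)) = b := by
      funext x
      exact QuotientAddGroup.out_eq' (b x)
    -- correct e by the coboundary of bt
    set e' : M.Emod.cochain (n + 2) := e - M.Emod.cobFun bt with he'
    have hpe' : ∀ x, M.pB (e' x) = 0 := by
      intro x
      have h1 : M.pB (e' x) = M.pB (e x) - M.pB (M.Emod.cobFun bt x) := by
        show M.pB (e x - M.Emod.cobFun bt x) = _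
        have := M.pB_add (e x - M.Emod.cobFun bt x) (M.Emod.cobFun bt x)
        rw [sub_add_cancel] at this
        rw [this]; abel
      have h2 : (fun x => M.pB (M.Emod.cobFun bt x)) = M.Bmod.cobFun (fun x => M.pB (bt x)) :=
        (cobFun_comp M.pB M.pB_add M.pB_smul bt).symm
      rw [h1, congrFun h2 x, hpbt, hb]
      simp
    have hmem : ∀ x, e' x ∈ M.Bsub := fun x => (M.pB_zero_iff _).1 (hpe' x)
    set g : M.cochain (n + 2) := fun x => (hmem x).choose with hg
    have hgspec : ∀ x, M.iotaE (g x) = e' x := fun x => (hmem x).choose_spec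
    refine ⟨g, ?_⟩
    -- ι ∘ ∂g = ι ∘ f, hence ∂g = f
    have h3 : M.Emod.cobFun (fun x => M.iotaE (g x)) = fun x => M.iotaE (M.cobFun g x) :=
      cobFun_comp M.iotaE M.iotaE_add M.iotaE_smul g
    have h4 : (fun x => M.iotaE (g x)) = e' := funext hgspec
    have h5 : M.Emod.cobFun e' = fun x => M.iotaE (f x) := by
      rw [he', M.Emod.cobFun_sub, he, M.Emod.cob_cob bt]
      funext x
      simp
    rw [h4, h5] at h3
    funext x
    exact M.iotaE_inj (congrFun h3.symm x)

end SgModule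
section AltSignMore

variable {A : Type} [AddCommGroup A]

lemma altSign_two (a : A) : altSign 2 a = a := by
  rw [show (2 : ℕ) = 1 + 1 from rfl, altSign_succ, altSign_one, neg_neg]

lemma altSign_three (a : A) : altSign 3 a = -a := by
  rw [show (3 : ℕ) = 2 + 1 from rfl, altSign_succ, altSign_two]

end AltSignMore

section Presentation

variable {X : Type} (P Q : FreeSemigroup X)

/-- Functions out of the free semigroup that respect the defining relation descend. -/
lemma relAPQ_desc {T : Type} (φ : FreeSemigroup (Option X) → T)
    (op : T → T → T) (hmul : ∀ u v, φ (u * v) = op (φ u) (φ v))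
    (hrel : φ (FreeSemigroup.of none * FreeSemigroup.map (some : X → Option X) P)
      = φ (FreeSemigroup.map (some : X → Option X) Q)) :
    ∀ u v, relAPQ X P Q u v → φ u = φ v := by
  intro u v h
  have h' : ConGen.Rel (fun u v =>
      u = FreeSemigroup.of none * FreeSemigroup.map (some : X → Option X) P ∧
        v = FreeSemigroup.map (some : X → Option X) Q) u v := h
  clear h
  induction h' with
  | of x y hxy =>
    obtain ⟨h1, h2⟩ := hxy
    subst h1; subst h2
    exact hrel
  | refl => rfl
  | symm _ ih => exact ih.symm
  | trans _ _ ih1 ih2 => exact ih1.trans ih2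
  | mul _ _ ih1 ih2 => rw [hmul, hmul, ih1, ih2]

/-- **H² vanishing** for the one-relator semigroup `⟨a, X ∣ aP = Q⟩`. -/
theorem H2vanish (M : SgModule (relAPQ X P Q).Quotient) (f : M.cochain 2)
    (hf : M.cobFun f = 0) : ∃ g, M.cobFun g = f := by
  classical
  set f2 : (relAPQ X P Q).Quotient → (relAPQ X P Q).Quotient → M.carrier :=
    fun s t => f (Fin.cons s (Fin.cons t Fin.elim0)) with hf2def
  have hf2c : ∀ (a b : (relAPQ X P Q).Quotient) (w : Fin 0 → (relAPQ X P Q).Quotient),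
      f (Fin.cons a (Fin.cons b w)) = f2 a b := by
    intro a b w
    refine congrArg f ?_
    funext i
    refine Fin.cases rfl (fun j => ?_) i
    refine Fin.cases rfl (fun k => k.elim0) j
  have hf2' : ∀ w : Fin 2 → (relAPQ X P Q).Quotient, f w = f2 (w 0) (w 1) := by
    intro w
    have hw : w = Fin.cons (w 0) (Fin.cons (w 1) Fin.elim0) := by
      funext i
      refine Fin.cases rfl (fun j => ?_) i
      refine Fin.cases rfl (fun k => k.elim0) j
    calc f w = f (Fin.cons (w 0) (Fin.cons (w 1) Fin.elim0)) := congrArg f hw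
      _ = f2 (w 0) (w 1) := hf2c _ _ _
  -- the 2-cocycle identity
  have hco : ∀ s t u : (relAPQ X P Q).Quotient,
      M.smul s (f2 t u) - f2 (s * t) u + f2 s (t * u) - f2 s t = 0 := by
    intro s t u
    have h0 := congrFun hf (Fin.cons s (Fin.cons t (Fin.cons u Fin.elim0)))
    rw [M.cobFun_apply, Fin.sum_univ_two,
      show (1 : Fin 2) = (0 : Fin 1).succ from rfl] at h0
    rw [mulContract_cons_zero, mulContract_cons_succ, mulContract_cons_zero] at h0
    simp only [Fin.tail_cons, Fin.cons_zero, init_cons'] at h0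
    simp only [hf2c, Fin.val_succ, Fin.val_zero, Nat.reduceAdd, altSign_one, altSign_two,
      altSign_three, Pi.zero_apply] at h0
    rw [← h0]
    abel
  -- the extension semigroup `A ⋊_f S`
  letI instMulT : Mul ((relAPQ X P Q).Quotient × M.carrier) :=
    ⟨fun p q => (p.1 * q.1, p.2 + M.smul p.1 q.2 - f2 p.1 q.1)⟩
  have hmulT : ∀ p q : (relAPQ X P Q).Quotient × M.carrier,
      p * q = (p.1 * q.1, p.2 + M.smul p.1 q.2 - f2 p.1 q.1) := fun _ _ => rfl
  letI instSemT : Semigroup ((relAPQ X P Q).Quotient × M.carrier) :=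
    { mul_assoc := by
        intro p q u
        rw [hmulT, hmulT, hmulT, hmulT]
        refine Prod.ext (mul_assoc _ _ _) ?_
        show p.2 + M.smul p.1 q.2 - f2 p.1 q.1 + M.smul (p.1 * q.1) u.2 - f2 (p.1 * q.1) u.1
          = p.2 + M.smul p.1 (q.2 + M.smul q.1 u.2 - f2 q.1 u.1) - f2 p.1 (q.1 * u.1)
        rw [M.smul_sub', M.smul_add, M.mul_smul, ← sub_eq_zero, ← hco p.1 q.1 u.1]
        abel }
  -- two lifts: with zero values, and with the corrected value at `a`
  set Λ₀ : FreeSemigroup (Option X) →ₙ* ((relAPQ X P Q).Quotient × M.carrier) :=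
    FreeSemigroup.lift (fun y =>
      (((FreeSemigroup.of y : FreeSemigroup (Option X)) : (relAPQ X P Q).Quotient), 0)) with hL0
  set aQ : (relAPQ X P Q).Quotient :=
    ((FreeSemigroup.of (none : Option X) : FreeSemigroup (Option X)) : (relAPQ X P Q).Quotient)
    with haQ
  set r : M.carrier :=
    (Λ₀ (FreeSemigroup.map (some : X → Option X) Q)).2
      - M.smul aQ ((Λ₀ (FreeSemigroup.map (some : X → Option X) P)).2)
      + f2 aQ ((FreeSemigroup.map (some : X → Option X) P :
          FreeSemigroup (Option X)) : (relAPQ X P Q).Quotient) with hr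
  set Λ : FreeSemigroup (Option X) →ₙ* ((relAPQ X P Q).Quotient × M.carrier) :=
    FreeSemigroup.lift (fun y =>
      (((FreeSemigroup.of y : FreeSemigroup (Option X)) : (relAPQ X P Q).Quotient),
        y.elim r (fun _ => 0))) with hL
  -- first components
  have hfst : ∀ (c : Option X → M.carrier) (u : FreeSemigroup (Option X)),
      ((FreeSemigroup.lift (fun y =>
        (((FreeSemigroup.of y : FreeSemigroup (Option X)) : (relAPQ X P Q).Quotient), c y))) u).1
      = (u : (relAPQ X P Q).Quotient) := by
    intro c u
    refine FreeSemigroup.recOnMul u (fun x => rfl) (fun u v ihu ihv => ?_)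
    rw [map_mul]
    show (_ * _ : (relAPQ X P Q).Quotient) = _
    rw [ihu, ihv, ← Con.coe_mul]
  have hfstL : ∀ u : FreeSemigroup (Option X), (Λ u).1 = (u : (relAPQ X P Q).Quotient) :=
    hfst _
  have hfstL0 : ∀ u : FreeSemigroup (Option X), (Λ₀ u).1 = (u : (relAPQ X P Q).Quotient) :=
    hfst _
  -- second component multiplicativity
  have hsnd : ∀ u v : FreeSemigroup (Option X),
      (Λ (u * v)).2 = (Λ u).2 + M.smul (u : (relAPQ X P Q).Quotient) ((Λ v).2)
        - f2 (u : (relAPQ X P Q).Quotient) (v : (relAPQ X P Q).Quotient) := by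
    intro u v
    rw [map_mul, hmulT]
    show (Λ u).2 + M.smul ((Λ u).1) ((Λ v).2) - f2 ((Λ u).1) ((Λ v).1) = _
    rw [hfstL, hfstL]
  -- Λ agrees with Λ₀ on words in `X`
  have hsame : ∀ w : FreeSemigroup X,
      Λ (FreeSemigroup.map (some : X → Option X) w)
        = Λ₀ (FreeSemigroup.map (some : X → Option X) w) := by
    intro w
    refine FreeSemigroup.recOnMul w (fun x => ?_) (fun u v ihu ihv => ?_)
    · rw [FreeSemigroup.map_of]
      rfl
    · rw [map_mul, map_mul, map_mul, ihu, ihv]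
  -- Λ respects the defining relation
  have hrel : Λ (FreeSemigroup.of none * FreeSemigroup.map (some : X → Option X) P)
      = Λ (FreeSemigroup.map (some : X → Option X) Q) := by
    refine Prod.ext ?_ ?_
    · rw [hfstL, hfstL]
      exact (Con.eq _).2 (ConGen.Rel.of _ _ ⟨rfl, rfl⟩)
    · rw [hsnd, hsame P, hsame Q]
      have h1 : (Λ (FreeSemigroup.of (none : Option X))).2 = r := rfl
      have h2 : ((FreeSemigroup.of (none : Option X) : FreeSemigroup (Option X)) :
          (relAPQ X P Q).Quotient) = aQ := rfl
      rw [h1, h2, hr]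
      abel
  -- descend to the quotient
  have hdesc := relAPQ_desc P Q (fun u => Λ u) (· * ·) (fun u v => map_mul Λ u v) hrel
  set g1 : (relAPQ X P Q).Quotient → M.carrier :=
    fun s => (Con.liftOn s (fun u => Λ u) hdesc).2 with hg1
  have hg1coe : ∀ u : FreeSemigroup (Option X),
      g1 (u : (relAPQ X P Q).Quotient) = (Λ u).2 := by
    intro u
    show (Con.liftOn ((u : (relAPQ X P Q).Quotient)) (fun u => Λ u) hdesc).2 = (Λ u).2
    rw [Con.liftOn_coe]
  have hg1law : ∀ s t : (relAPQ X P Q).Quotient,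
      g1 (s * t) = g1 s + M.smul s (g1 t) - f2 s t := by
    intro s t
    refine Con.induction_on₂ s t (fun u v => ?_)
    rw [← Con.coe_mul, hg1coe, hg1coe, hg1coe, hsnd]
  -- the coboundary of `g1` is `f`
  refine ⟨fun v => g1 (v 0), ?_⟩
  funext x
  rw [M.cobFun_apply, Fin.sum_univ_one]
  show M.smul (x 0) (g1 (Fin.tail x 0)) + altSign (0 + 1) (g1 (mulContract x 0 0))
      + altSign 2 (g1 (Fin.init x 0)) = f x
  have e1 : Fin.tail x 0 = x 1 := rfl
  have e2 : mulContract x 0 0 = x 0 * x 1 := by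
    simp [mulContract]
  have e3 : Fin.init x 0 = x 0 := rfl
  rw [e1, e2, e3, show (0 + 1 : ℕ) = 1 from rfl, altSign_one, altSign_two, hg1law, hf2' x]
  abel

end Presentation
section Glue

/-- Triviality of cohomology from cocycles ⊆ coboundaries. -/
theorem coh_subsingleton {S : Type} [Semigroup S] (M : SgModule S) (m : ℕ)
    (hle : ∀ f ∈ M.cocycles m, f ∈ M.cobounds m) : Subsingleton (M.cohomology m) := by
  have htop : (M.cobounds m).addSubgroupOf (M.cocycles m) = ⊤ := by
    rw [AddSubgroup.eq_top_iff']
    rintro ⟨fx, hfx⟩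
    exact (AddSubgroup.mem_addSubgroupOf).2 (hle fx hfx)
  unfold SgModule.cohomology
  rw [htop]
  exact QuotientAddGroup.subsingleton_quotient_top

end Glue

section H1Part

variable {X : Type} (P Q : FreeSemigroup X)

/-- Weight of a letter: letters of `X` have weight 1, the letter `a` has weight `|Q| - |P|`. -/
def wgt : Option X → ℤ := fun o => o.elim ((Q.length : ℤ) - (P.length : ℤ)) (fun _ => 1)

/-- Total weight of a word. -/
def phiw (u : FreeSemigroup (Option X)) : ℤ :=
  wgt P Q u.head + (u.tail.map (wgt P Q)).sum

lemma phiw_mul (u v : FreeSemigroup (Option X)) : phiw P Q (u * v) = phiw P Q u + phiw P Q v := by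
  unfold phiw
  rw [FreeSemigroup.head_mul, FreeSemigroup.tail_mul, List.map_append, List.sum_append,
    List.map_cons, List.sum_cons]
  ring

lemma phiw_map_some (w : FreeSemigroup X) :
    phiw P Q (FreeSemigroup.map (some : X → Option X) w) = (w.length : ℤ) := by
  refine FreeSemigroup.recOnMul w (fun x => ?_) (fun u v ihu ihv => ?_)
  · rw [FreeSemigroup.map_of]
    show (1 : ℤ) + ([].map (wgt P Q)).sum = ((FreeSemigroup.of x).length : ℤ)
    rw [FreeSemigroup.length_of]
    simp
  · rw [map_mul, phiw_mul, ihu, ihv, FreeSemigroup.length_mul]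
    push_cast
    ring

lemma phiw_rel : phiw P Q (FreeSemigroup.of none * FreeSemigroup.map (some : X → Option X) P)
    = phiw P Q (FreeSemigroup.map (some : X → Option X) Q) := by
  rw [phiw_mul, phiw_map_some, phiw_map_some]
  show (Q.length : ℤ) - (P.length : ℤ) + ([].map (wgt P Q)).sum + (P.length : ℤ) = _
  simp

/-- The induced additive character on the quotient. -/
noncomputable def phibar : (relAPQ X P Q).Quotient → ℤ :=
  fun s => Con.liftOn s (phiw P Q) (relAPQ_desc P Q (phiw P Q) (· + ·) (phiw_mul P Q) (phiw_rel P Q))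

lemma phibar_coe (u : FreeSemigroup (Option X)) :
    phibar P Q (u : (relAPQ X P Q).Quotient) = phiw P Q u :=
  Con.liftOn_coe _ _ _ u

lemma phibar_mul (s t : (relAPQ X P Q).Quotient) :
    phibar P Q (s * t) = phibar P Q s + phibar P Q t := by
  refine Con.induction_on₂ s t (fun u v => ?_)
  rw [← Con.coe_mul, phibar_coe, phibar_coe, phibar_coe, phiw_mul]

/-- The trivial module `ℤ`. -/
def Mtriv : SgModule (relAPQ X P Q).Quotient where
  carrier := ℤ
  grp := inferInstance
  smul _ a := a
  smul_add _ _ _ := rfl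
  mul_smul _ _ _ := rfl

theorem H1nontrivial : Nontrivial ((Mtriv P Q).cohomology 1) := by
  classical
  set F1 : (Mtriv P Q).cochain 1 := fun v => phibar P Q (v 0) with hF1
  have hcoc : (Mtriv P Q).cobFun F1 = 0 := by
    funext x
    rw [SgModule.cobFun_apply, Fin.sum_univ_one]
    have e2 : mulContract x 0 0 = x 0 * x 1 := by simp [mulContract]
    show phibar P Q (Fin.tail x 0) + altSign ((0 : Fin 1) + 1 : ℕ) (phibar P Q (mulContract x 0 0))
        + altSign 2 (phibar P Q (Fin.init x 0)) = 0
    rw [e2, show (Fin.tail x 0) = x 1 from rfl, show (Fin.init x 0) = x 0 from rfl,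
      show (((0 : Fin 1) : ℕ) + 1) = 1 from rfl, altSign_one, altSign_two, phibar_mul]
    ring
  have hmem : F1 ∈ (Mtriv P Q).cocycles 1 := by
    rw [SgModule.cocycles, AddMonoidHom.mem_ker]
    exact hcoc
  have hne : F1 ∉ (Mtriv P Q).cobounds 1 := by
    rintro ⟨c, hc⟩
    have h1 := congrFun hc
      (fun _ => ((FreeSemigroup.of (some P.head) : FreeSemigroup (Option X)) :
        (relAPQ X P Q).Quotient))
    rw [show ((Mtriv P Q).cob 0) c = (Mtriv P Q).cobFun c from rfl] at h1
    rw [SgModule.cobFun_apply] at h1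
    rw [Finset.univ_eq_empty, Finset.sum_empty, altSign_one] at h1
    have h2 : (Fin.tail (fun _ => ((FreeSemigroup.of (some P.head) : FreeSemigroup (Option X)) :
        (relAPQ X P Q).Quotient)) : Fin 0 → (relAPQ X P Q).Quotient)
        = Fin.init (fun _ => ((FreeSemigroup.of (some P.head) : FreeSemigroup (Option X)) :
        (relAPQ X P Q).Quotient)) := funext fun i => i.elim0
    rw [h2] at h1
    rw [show ∀ (s : (relAPQ X P Q).Quotient) (a : (Mtriv P Q).carrier),
      (Mtriv P Q).smul s a = a from fun _ _ => rfl] at h1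
    have h3 : F1 (fun _ => ((FreeSemigroup.of (some P.head) : FreeSemigroup (Option X)) :
        (relAPQ X P Q).Quotient)) = 0 := by
      rw [← h1]
      abel
    rw [hF1] at h3
    simp only [phibar_coe] at h3
    have h4 : phiw P Q (FreeSemigroup.of (some P.head)) = 1 := by
      show (1 : ℤ) + ([].map (wgt P Q)).sum = 1
      simp
    rw [h4] at h3
    exact absurd (show (1 : ℤ) = 0 from h3) (by norm_num)

  refine ⟨⟨QuotientAddGroup.mk ⟨F1, hmem⟩, 0, fun h => ?_⟩⟩
  have h2 : (⟨F1, hmem⟩ : (Mtriv P Q).cocycles 1)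
      ∈ ((Mtriv P Q).cobounds 1).addSubgroupOf ((Mtriv P Q).cocycles 1) :=
    (QuotientAddGroup.eq_zero_iff _).1 h
  exact hne ((AddSubgroup.mem_addSubgroupOf).1 h2)

end H1Part
/-- For `S = ⟨a, X ∣ aP = Q⟩` with `P, Q` nonempty words not
containing the letter `a`, one has `H²(S, A) = 0` for every `S`-module `A`,
and `c.d. S = 1`. -/
theorem cd_one_of_relation_aP_eq_Q (X : Type) (P Q : FreeSemigroup X) :
    (∀ M : SgModule (relAPQ X P Q).Quotient, Subsingleton (M.cohomology 2)) ∧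
      cohDim (relAPQ X P Q).Quotient = 1 := by
  have hall := SgModule.vanish_of_H2 (fun M f hf => H2vanish P Q M f hf)
  have hsub : ∀ (n : ℕ) (M : SgModule (relAPQ X P Q).Quotient),
      Subsingleton (M.cohomology (n + 2)) := by
    intro n M
    refine coh_subsingleton M (n + 2) (fun f hf => ?_)
    have hf' : M.cobFun f = 0 := hf
    obtain ⟨g, hg⟩ := hall n M f hf'
    show f ∈ (M.cob (n + 1)).range
    exact ⟨g, hg⟩
  refine ⟨fun M => hsub 0 M, ?_⟩
  apply le_antisymm
  · apply sSup_le
    rintro e ⟨n, rfl, M, hnt⟩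
    match n with
    | 0 => exact_mod_cast Nat.zero_le 1
    | 1 => exact le_refl _
    | (n + 2) => exact absurd hnt (not_nontrivial_iff_subsingleton.2 (hsub n M))
  · apply le_sSup
    exact ⟨1, by norm_num, Mtriv P Q, H1nontrivial P Q⟩
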